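/- arXiv:1301.2131 — 2 statements merged into one kernel-verified Lean document; each statement's English description precedes it below -/
import Mathlib

section
/- Let λ ∈ ℂ*, and let V be a Virasoro module that is a highest weight module or a Whittaker module L_{ψ_n,θ} (so each vector is killed by d_l for l large). Then every submodule of Ω(λ,1) ⊗ V has the form ∂Ω(λ,1) ⊗ X₁ + Ω(λ,1) ⊗ X₂ for some submodules X₁, X₂ of V. -/
open Polynomial TensorProduct

/-- The Virasoro commutation relations for a family of operators `d i` (the action of the
basis vectors `d_i`) and a central operator `cc` (the action of the central element `c`) on a
complex vector space: `[d_i, d_j] = (j - i) d_{i+j} + δ_{i,-j} (i^3 - i)/12 c` and `c` central. -/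
def VirRep {V : Type*} [AddCommGroup V] [Module ℂ V]
    (d : ℤ → Module.End ℂ V) (cc : Module.End ℂ V) : Prop :=
  (∀ i : ℤ, cc * d i = d i * cc) ∧
    ∀ i j : ℤ, d i * d j - d j * d i =
      ((j : ℂ) - (i : ℂ)) • d (i + j) +
        (if i + j = 0 then ((i : ℂ) ^ 3 - (i : ℂ)) / 12 else 0) • cc

/-- A subspace invariant under the Virasoro action, i.e. a Virasoro submodule. -/
def VirInvariant {V : Type*} [AddCommGroup V] [Module ℂ V]
    (d : ℤ → Module.End ℂ V) (cc : Module.End ℂ V) (p : Submodule ℂ V) : Prop :=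
  (∀ i : ℤ, ∀ v ∈ p, d i v ∈ p) ∧ ∀ v ∈ p, cc v ∈ p

/-- The operator by which `d_n` acts on `Ω(λ, b) = ℂ[∂]`:
`f(∂) ↦ λ^n (∂ + n(b-1)) f(∂ - n)`. The central element acts by `0`. -/
noncomputable def omegaD (lam b : ℂ) (n : ℤ) : Module.End ℂ (Polynomial ℂ) where
  toFun f := lam ^ n • ((X + Polynomial.C ((n : ℂ) * (b - 1))) * f.comp (X - Polynomial.C (n : ℂ)))
  map_add' f g := by simp [add_comp, mul_add, smul_add]
  map_smul' a f := by
    simp only [RingHom.id_apply, smul_comp, mul_smul_comm]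
    rw [smul_comm]

/-- The diagonal action of `d_i` on a tensor product of two Virasoro modules. -/
noncomputable def tensorD {V W : Type*} [AddCommGroup V] [Module ℂ V] [AddCommGroup W]
    [Module ℂ W] (dV : ℤ → Module.End ℂ V) (dW : ℤ → Module.End ℂ W) (i : ℤ) :
    Module.End ℂ (V ⊗[ℂ] W) :=
  LinearMap.rTensor W (dV i) + LinearMap.lTensor V (dW i)

/-- The diagonal action of the central element on a tensor product of two Virasoro modules. -/
noncomputable def tensorC {V W : Type*} [AddCommGroup V] [Module ℂ V] [AddCommGroup W]
    [Module ℂ W] (cV : Module.End ℂ V) (cW : Module.End ℂ W) : Module.End ℂ (V ⊗[ℂ] W) :=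
  LinearMap.rTensor W cV + LinearMap.lTensor V cW

/- ### Auxiliary lemmas -/

lemma omegaD_one_pow (lam : ℂ) (m : ℤ) (k : ℕ) :
    omegaD lam 1 m ((X : Polynomial ℂ) ^ k)
      = lam ^ m • ((X : Polynomial ℂ) * (X - C (m : ℂ)) ^ k) := by
  simp [omegaD, pow_comp]

lemma omegaD_one_X (lam : ℂ) (m : ℤ) :
    omegaD lam 1 m (X : Polynomial ℂ) = lam ^ m • ((X : Polynomial ℂ) * (X - C (m : ℂ))) := by
  simp [omegaD]

lemma omegaD_one_one (lam : ℂ) (m : ℤ) :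
    omegaD lam 1 m (1 : Polynomial ℂ) = lam ^ m • (X : Polynomial ℂ) := by
  simp only [omegaD, LinearMap.coe_mk, AddHom.coe_mk, one_comp, mul_one, sub_self, mul_zero,
    map_zero, add_zero]

lemma tensorD_tmul {V W : Type*} [AddCommGroup V] [Module ℂ V] [AddCommGroup W]
    [Module ℂ W] (dV : ℤ → Module.End ℂ V) (dW : ℤ → Module.End ℂ W) (i : ℤ) (f : V) (w : W) :
    tensorD dV dW i (f ⊗ₜ[ℂ] w) = (dV i f) ⊗ₜ[ℂ] w + f ⊗ₜ[ℂ] (dW i w) := by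
  simp [tensorD]

/-- the finite-difference argument: the coefficients of a polynomial (in `m`) family of
vectors all lying in a submodule `M` for `m ≥ K` themselves lie in `M`. -/
lemma coeff_mem_of_poly_mem {W : Type*} [AddCommGroup W] [Module ℂ W]
    (M : Submodule ℂ W) (K : ℤ) :
    ∀ (n : ℕ) (c : ℕ → W),
      (∀ m : ℤ, K ≤ m → (∑ t ∈ Finset.range (n+1), (m:ℂ)^t • c t) ∈ M) →
      c n ∈ M := by
  intro n
  induction n with
  | zero =>
    intro c h
    simpa using h K le_rfl
  | succ n ih =>
    intro c h
    set c' : ℕ → W := fun s => ∑ t ∈ Finset.Ico (s+1) (n+2), ((t.choose s : ℕ) : ℂ) • c t with hc'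
    have key : ∀ m : ℤ, (∑ s ∈ Finset.range (n+1), (m:ℂ)^s • c' s)
        = (∑ t ∈ Finset.range (n+2), ((m:ℂ)+1)^t • c t)
          - ∑ t ∈ Finset.range (n+2), (m:ℂ)^t • c t := by
      intro m
      rw [← Finset.sum_sub_distrib]
      have e1 : ∀ t : ℕ, ((m:ℂ)+1)^t • c t - (m:ℂ)^t • c t
          = ∑ s ∈ Finset.range t, (((t.choose s : ℕ) : ℂ) * (m:ℂ)^s) • c t := by
        intro t
        rw [← sub_smul, ← Finset.sum_smul]
        congr 1
        have : ((m:ℂ)+1)^t = ∑ s ∈ Finset.range (t+1), (m:ℂ)^s * 1^(t-s) * (t.choose s : ℂ) :=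
          add_pow (m:ℂ) 1 t
        rw [this, Finset.sum_range_succ]
        simp [mul_comm]
      rw [Finset.sum_congr rfl fun t _ => e1 t]
      rw [Finset.sum_comm' (t' := Finset.range (n+1)) (s' := fun s => Finset.Ico (s+1) (n+2))
        (by intro t s; simp only [Finset.mem_range, Finset.mem_Ico]; omega)]
      refine Finset.sum_congr rfl fun s _ => ?_
      rw [hc', Finset.smul_sum]
      refine Finset.sum_congr rfl fun t _ => ?_
      rw [smul_smul, mul_comm]
    have h' : ∀ m : ℤ, K ≤ m → (∑ s ∈ Finset.range (n+1), (m:ℂ)^s • c' s) ∈ M := by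
      intro m hm
      rw [key m]
      refine sub_mem ?_ (h m hm)
      have := h (m+1) (by omega)
      convert this using 2 with t
      push_cast
      ring_nf
    have hcn : c' n ∈ M := ih c' h'
    have hcc : c' n = ((n+1 : ℕ) : ℂ) • c (n+1) := by
      show (∑ t ∈ Finset.Ico (n+1) (n+2), ((t.choose n : ℕ) : ℂ) • c t) = _
      rw [show Finset.Ico (n+1) (n+2) = {n+1} from Nat.Ico_succ_singleton (n+1)]
      simp [Nat.choose_succ_self_right]
    have hne : ((n+1 : ℕ) : ℂ) ≠ 0 := Nat.cast_ne_zero.mpr (Nat.succ_ne_zero n)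
    have h2 := M.smul_mem (((n+1:ℕ):ℂ))⁻¹ hcn
    rwa [hcc, inv_smul_smul₀ hne] at h2

section Aux

variable {V : Type*} [AddCommGroup V] [Module ℂ V]

lemma pow_expand (m : ℂ) (k : ℕ) (v : V) :
    ((X : Polynomial ℂ) * (X - C m) ^ k) ⊗ₜ[ℂ] v
      = ∑ t ∈ Finset.range (k+1),
          (((-m) ^ t) * ((k.choose t : ℕ) : ℂ)) • (((X : Polynomial ℂ) ^ (k - t + 1)) ⊗ₜ[ℂ] v) := by
  have h1 : (X - C m : Polynomial ℂ) = C (-m) + X := by ring_nf; rw [map_neg]; ring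
  rw [h1, add_pow, Finset.mul_sum, TensorProduct.sum_tmul]
  refine Finset.sum_congr rfl fun t ht => ?_
  have : (X : Polynomial ℂ) * (C (-m) ^ t * X ^ (k - t) * (k.choose t : Polynomial ℂ))
      = (((-m) ^ t) * ((k.choose t : ℕ) : ℂ)) • (X ^ (k - t + 1)) := by
    rw [← C_pow, Polynomial.smul_eq_C_mul,
      ← map_natCast (C : ℂ →+* Polynomial ℂ) (k.choose t)]
    rw [C_mul]
    ring
  rw [this, smul_tmul']

variable (lam : ℂ) (d : ℤ → Module.End ℂ V) (M : Submodule ℂ (Polynomial ℂ ⊗[ℂ] V))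

/-- applying `d_m` to a sum `∑ X^j ⊗ v_j` with all `d_m v_j = 0` and rescaling. -/
lemma scaled_action (hlam : lam ≠ 0)
    (hMd : ∀ i : ℤ, ∀ x ∈ M, tensorD (omegaD lam 1) d i x ∈ M)
    (m : ℤ) (n : ℕ) (v : ℕ → V)
    (hv : ∀ j, j < n + 1 → d m (v j) = 0)
    (hw : (∑ j ∈ Finset.range (n+1), ((X : Polynomial ℂ) ^ j) ⊗ₜ[ℂ] v j) ∈ M) :
    (∑ j ∈ Finset.range (n+1), ((X : Polynomial ℂ) * (X - C (m : ℂ)) ^ j) ⊗ₜ[ℂ] v j) ∈ M := by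
  have h1 := hMd m _ hw
  rw [map_sum] at h1
  have e : ∀ j ∈ Finset.range (n+1),
      tensorD (omegaD lam 1) d m (((X : Polynomial ℂ) ^ j) ⊗ₜ[ℂ] v j)
        = lam ^ m • (((X : Polynomial ℂ) * (X - C (m : ℂ)) ^ j) ⊗ₜ[ℂ] v j) := by
    intro j hj
    rw [tensorD_tmul, omegaD_one_pow, hv j (Finset.mem_range.mp hj), tmul_zero, add_zero,
      smul_tmul']
  rw [Finset.sum_congr rfl e, ← Finset.smul_sum] at h1
  have h2 := M.smul_mem (lam ^ m)⁻¹ h1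
  rwa [inv_smul_smul₀ (zpow_ne_zero _ hlam)] at h2

/-- propagation: if `X ⊗ v ∈ M` then `X^{k+1} ⊗ v ∈ M` for all `k`. -/
lemma prop_mem (hlam : lam ≠ 0)
    (hMd : ∀ i : ℤ, ∀ x ∈ M, tensorD (omegaD lam 1) d i x ∈ M)
    (hnil : ∀ v : V, ∃ K : ℤ, ∀ l : ℤ, K ≤ l → d l v = 0)
    (v : V) (hv : (X : Polynomial ℂ) ⊗ₜ[ℂ] v ∈ M) :
    ∀ k : ℕ, ((X : Polynomial ℂ) ^ (k+1)) ⊗ₜ[ℂ] v ∈ M := by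
  obtain ⟨K, hK⟩ := hnil v
  intro k
  induction k using Nat.strong_induction_on with
  | _ k ih =>
    match k with
    | 0 => simpa using hv
    | (j+1) =>
      have hj : ((X : Polynomial ℂ) ^ (j+1)) ⊗ₜ[ℂ] v ∈ M := ih j (by omega)
      have h1 := hMd K _ hj
      rw [tensorD_tmul, omegaD_one_pow, hK K le_rfl, tmul_zero, add_zero, ← smul_tmul'] at h1
      have h2 := M.smul_mem (lam ^ K)⁻¹ h1
      rw [inv_smul_smul₀ (zpow_ne_zero _ hlam)] at h2
      rw [pow_expand, Finset.sum_range_succ'] at h2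
      simp only [pow_zero, one_mul, Nat.choose_zero_right, Nat.cast_one, Nat.sub_zero,
        one_smul] at h2
      have h3 : (∑ i ∈ Finset.range (j+1),
          (((-(K:ℂ)) ^ (i+1)) * (((j+1).choose (i+1) : ℕ) : ℂ)) •
            (((X : Polynomial ℂ) ^ (j + 1 - (i+1) + 1)) ⊗ₜ[ℂ] v)) ∈ M := by
        refine Submodule.sum_mem M fun i hi => Submodule.smul_mem M _ ?_
        have : j + 1 - (i+1) + 1 = (j - i) + 1 := by omega
        rw [this]
        exact ih (j - i) (by omega)
      have h4 := sub_mem h2 h3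
      rwa [add_sub_cancel_left] at h4

/-- extraction of the leading coefficient of an element of `M`. -/
lemma extract_mem (hlam : lam ≠ 0)
    (hMd : ∀ i : ℤ, ∀ x ∈ M, tensorD (omegaD lam 1) d i x ∈ M)
    (hnil : ∀ v : V, ∃ K : ℤ, ∀ l : ℤ, K ≤ l → d l v = 0)
    (n : ℕ) (v : ℕ → V)
    (hw : (∑ j ∈ Finset.range (n+1), ((X : Polynomial ℂ) ^ j) ⊗ₜ[ℂ] v j) ∈ M) :
    (X : Polynomial ℂ) ⊗ₜ[ℂ] v n ∈ M := by
  obtain ⟨K, hK⟩ : ∃ K : ℤ, ∀ j, j < n + 1 → ∀ l : ℤ, K ≤ l → d l (v j) = 0 := by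
    choose Kf hKf using fun j : ℕ => hnil (v j)
    refine ⟨(Finset.range (n+1)).sup' (by simp) Kf, fun j hj l hl => hKf j l ?_⟩
    exact le_trans (Finset.le_sup' Kf (Finset.mem_range.mpr hj)) hl
  set c : ℕ → Polynomial ℂ ⊗[ℂ] V := fun t =>
    ∑ j ∈ Finset.Ico t (n+1),
      (((-1:ℂ)) ^ t * ((j.choose t : ℕ) : ℂ)) • (((X : Polynomial ℂ) ^ (j - t + 1)) ⊗ₜ[ℂ] v j)
    with hc
  have key : ∀ m : ℤ, (∑ t ∈ Finset.range (n+1), (m:ℂ)^t • c t)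
      = ∑ j ∈ Finset.range (n+1), ((X : Polynomial ℂ) * (X - C (m : ℂ)) ^ j) ⊗ₜ[ℂ] v j := by
    intro m
    rw [Finset.sum_congr rfl fun j (_ : j ∈ Finset.range (n+1)) => pow_expand (m:ℂ) j (v j)]
    rw [Finset.sum_comm' (t' := Finset.range (n+1)) (s' := fun t => Finset.Ico t (n+1))
      (by intro j t; simp only [Finset.mem_range, Finset.mem_Ico]; omega)]
    refine Finset.sum_congr rfl fun t _ => ?_
    rw [hc, Finset.smul_sum]
    refine Finset.sum_congr rfl fun j _ => ?_
    rw [smul_smul]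
    congr 1
    rw [neg_pow]
    ring
  have hpoly : ∀ m : ℤ, K ≤ m → (∑ t ∈ Finset.range (n+1), (m:ℂ)^t • c t) ∈ M := by
    intro m hm
    rw [key m]
    exact scaled_action lam d M hlam hMd m n v (fun j hj => hK j hj m hm) hw
  have hcn : c n ∈ M := coeff_mem_of_poly_mem M K n c hpoly
  have hceq : c n = ((-1:ℂ))^n • ((X : Polynomial ℂ) ⊗ₜ[ℂ] v n) := by
    simp only [hc]
    rw [show Finset.Ico n (n+1) = {n} from Nat.Ico_succ_singleton n]
    simp
  have h2 := M.smul_mem (((-1:ℂ))^n)⁻¹ hcn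
  rwa [hceq, inv_smul_smul₀ (by simp [pow_ne_zero])] at h2

/-- every element of `ℂ[X] ⊗ V` has a standard representation `∑ X^j ⊗ v_j`. -/
lemma rep_exists (w : Polynomial ℂ ⊗[ℂ] V) :
    ∃ (n : ℕ) (v : ℕ → V), w = ∑ j ∈ Finset.range n, ((X : Polynomial ℂ) ^ j) ⊗ₜ[ℂ] v j := by
  induction w using TensorProduct.induction_on with
  | zero => exact ⟨0, fun _ => 0, by simp⟩
  | tmul f x =>
    refine ⟨f.natDegree + 1, fun j => f.coeff j • x, ?_⟩
    conv_lhs => rw [Polynomial.as_sum_range' f (f.natDegree+1) (Nat.lt_succ_self _)]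
    rw [TensorProduct.sum_tmul]
    refine Finset.sum_congr rfl fun j _ => ?_
    rw [← C_mul_X_pow_eq_monomial, mul_comm (C (f.coeff j)) (X ^ j),
      mul_comm (X ^ j) (C (f.coeff j)), ← Polynomial.smul_eq_C_mul, smul_tmul]
  | add x y hx hy =>
    obtain ⟨n1, v1, rfl⟩ := hx
    obtain ⟨n2, v2, rfl⟩ := hy
    refine ⟨max n1 n2, fun j => (if j < n1 then v1 j else 0) + (if j < n2 then v2 j else 0), ?_⟩
    have split : ∀ (nn : ℕ) (hnn : nn ≤ max n1 n2) (u : ℕ → V),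
        (∑ j ∈ Finset.range nn, ((X : Polynomial ℂ) ^ j) ⊗ₜ[ℂ] u j)
          = ∑ j ∈ Finset.range (max n1 n2),
              ((X : Polynomial ℂ) ^ j) ⊗ₜ[ℂ] (if j < nn then u j else 0) := by
      intro nn hnn u
      rw [← Finset.sum_subset (Finset.range_subset_range.mpr hnn)
        (fun x _ hx => by rw [if_neg (by simpa using hx), tmul_zero])]
      exact Finset.sum_congr rfl fun j hj => by rw [if_pos (Finset.mem_range.mp hj)]
    rw [split n1 (le_max_left _ _) v1, split n2 (le_max_right _ _) v2,
      ← Finset.sum_add_distrib]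
    exact Finset.sum_congr rfl fun j _ => by rw [tmul_add]

end Aux

/-- for `b = 1` and `V` a highest weight or Whittaker module (each vector
killed by `d_l` for `l` large), every submodule of `Ω(λ,1) ⊗ V` has the form
`∂Ω(λ,1) ⊗ X₁ + Ω(λ,1) ⊗ X₂` for submodules `X₁, X₂ ⊆ V`. -/
theorem submodules_of_tensor_b_one {V : Type*} [AddCommGroup V] [Module ℂ V]
    (lam : ℂ) (hlam : lam ≠ 0)
    (d : ℤ → Module.End ℂ V) (cV : Module.End ℂ V) (hrep : VirRep d cV)
    (hnil : ∀ v : V, ∃ K : ℤ, ∀ l : ℤ, K ≤ l → d l v = 0)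
    (M : Submodule ℂ (Polynomial ℂ ⊗[ℂ] V))
    (hM : VirInvariant (tensorD (omegaD lam 1) d) (tensorC 0 cV) M) :
    ∃ X1 X2 : Submodule ℂ V, VirInvariant d cV X1 ∧ VirInvariant d cV X2 ∧
      M = LinearMap.range
            (TensorProduct.map (LinearMap.mulLeft ℂ (X : Polynomial ℂ)) X1.subtype) ⊔
          LinearMap.range (LinearMap.lTensor (Polynomial ℂ) X2.subtype) := by
  obtain ⟨hMd, hMc⟩ := hM
  set X1 : Submodule ℂ V := M.comap ((TensorProduct.mk ℂ (Polynomial ℂ) V) X) with hX1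
  set X2 : Submodule ℂ V := M.comap ((TensorProduct.mk ℂ (Polynomial ℂ) V) 1) with hX2
  have memX1 : ∀ v : V, v ∈ X1 ↔ (X : Polynomial ℂ) ⊗ₜ[ℂ] v ∈ M := fun v => Iff.rfl
  have memX2 : ∀ v : V, v ∈ X2 ↔ (1 : Polynomial ℂ) ⊗ₜ[ℂ] v ∈ M := fun v => Iff.rfl
  have hprop : ∀ (v : V), (X : Polynomial ℂ) ⊗ₜ[ℂ] v ∈ M →
      ∀ k : ℕ, ((X : Polynomial ℂ) ^ (k+1)) ⊗ₜ[ℂ] v ∈ M :=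
    fun v hv k => prop_mem lam d M hlam hMd hnil v hv k
  have X2subX1 : ∀ v ∈ X2, v ∈ X1 := by
    intro v hv
    have h0 : (∑ j ∈ Finset.range (0+1), ((X : Polynomial ℂ) ^ j) ⊗ₜ[ℂ] (fun _ => v) j) ∈ M := by
      simpa using (memX2 v).mp hv
    exact (memX1 v).mpr (extract_mem lam d M hlam hMd hnil 0 (fun _ => v) h0)
  have inv1 : VirInvariant d cV X1 := by
    constructor
    · intro i v hv
      rw [memX1] at hv ⊢
      have h1 := hMd i _ hv
      rw [tensorD_tmul, omegaD_one_X, ← smul_tmul'] at h1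
      have h2 : (lam ^ i • (((X : Polynomial ℂ) * (X - C (i:ℂ))) ⊗ₜ[ℂ] v)) ∈ M := by
        refine M.smul_mem _ ?_
        have e : ((X : Polynomial ℂ) * (X - C (i:ℂ))) ⊗ₜ[ℂ] v
            = ((X : Polynomial ℂ)^2) ⊗ₜ[ℂ] v - (i:ℂ) • ((X : Polynomial ℂ) ⊗ₜ[ℂ] v) := by
          rw [smul_tmul', ← sub_tmul]
          congr 1
          rw [Polynomial.smul_eq_C_mul]
          ring
        rw [e]
        exact sub_mem (hprop v hv 1) (M.smul_mem _ hv)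
      have h3 := sub_mem h1 h2
      rwa [add_sub_cancel_left] at h3
    · intro v hv
      rw [memX1] at hv ⊢
      have h1 := hMc _ hv
      have e : tensorC (0 : Module.End ℂ (Polynomial ℂ)) cV ((X : Polynomial ℂ) ⊗ₜ[ℂ] v)
          = (X : Polynomial ℂ) ⊗ₜ[ℂ] (cV v) := by
        simp [tensorC]
      rwa [e] at h1
  have inv2 : VirInvariant d cV X2 := by
    constructor
    · intro i v hv
      have hvM : (1 : Polynomial ℂ) ⊗ₜ[ℂ] v ∈ M := (memX2 v).mp hv
      rw [memX2]
      have h1 := hMd i _ hvM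
      rw [tensorD_tmul, omegaD_one_one, ← smul_tmul'] at h1
      have h2 : (lam ^ i • ((X : Polynomial ℂ) ⊗ₜ[ℂ] v)) ∈ M :=
        M.smul_mem _ ((memX1 v).mp (X2subX1 v hv))
      have h3 := sub_mem h1 h2
      rwa [add_sub_cancel_left] at h3
    · intro v hv
      rw [memX2] at hv ⊢
      have h1 := hMc _ hv
      have e : tensorC (0 : Module.End ℂ (Polynomial ℂ)) cV ((1 : Polynomial ℂ) ⊗ₜ[ℂ] v)
          = (1 : Polynomial ℂ) ⊗ₜ[ℂ] (cV v) := by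
        simp [tensorC]
      rwa [e] at h1
  refine ⟨X1, X2, inv1, inv2, ?_⟩
  set A := LinearMap.range
    (TensorProduct.map (LinearMap.mulLeft ℂ (X : Polynomial ℂ)) X1.subtype) with hA
  set B := LinearMap.range (LinearMap.lTensor (Polynomial ℂ) X2.subtype) with hB
  have hAmem : ∀ (k : ℕ) (v : V), v ∈ X1 → ((X : Polynomial ℂ) ^ (k+1)) ⊗ₜ[ℂ] v ∈ A := by
    intro k v hv
    refine ⟨((X : Polynomial ℂ) ^ k) ⊗ₜ[ℂ] (⟨v, hv⟩ : X1), ?_⟩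
    rw [TensorProduct.map_tmul]
    simp [pow_succ']
  have hBmem : ∀ (f : Polynomial ℂ) (v : V), v ∈ X2 → f ⊗ₜ[ℂ] v ∈ B := by
    intro f v hv
    exact ⟨f ⊗ₜ[ℂ] (⟨v, hv⟩ : X2), by simp⟩
  apply le_antisymm
  · -- M ≤ A ⊔ B
    have main : ∀ n : ℕ, ∀ v : ℕ → V,
        (∑ j ∈ Finset.range (n+1), ((X : Polynomial ℂ) ^ j) ⊗ₜ[ℂ] v j) ∈ M →
        (∑ j ∈ Finset.range (n+1), ((X : Polynomial ℂ) ^ j) ⊗ₜ[ℂ] v j) ∈ A ⊔ B := by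
      intro n
      induction n with
      | zero =>
        intro v hv
        have e0 : (∑ j ∈ Finset.range (0+1), ((X : Polynomial ℂ) ^ j) ⊗ₜ[ℂ] v j)
            = (1 : Polynomial ℂ) ⊗ₜ[ℂ] v 0 := by simp
        rw [e0] at hv ⊢
        exact Submodule.mem_sup_right (hBmem 1 (v 0) ((memX2 (v 0)).mpr hv))
      | succ n ih =>
        intro v hv
        have hx : (X : Polynomial ℂ) ⊗ₜ[ℂ] v (n+1) ∈ M :=
          extract_mem lam d M hlam hMd hnil (n+1) v hv
        have hpow : ((X : Polynomial ℂ) ^ (n+1)) ⊗ₜ[ℂ] v (n+1) ∈ M := hprop _ hx n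
        have hsub : (∑ j ∈ Finset.range (n+1), ((X : Polynomial ℂ) ^ j) ⊗ₜ[ℂ] v j) ∈ M := by
          have h4 := sub_mem hv hpow
          rwa [Finset.sum_range_succ, add_sub_cancel_right] at h4
        rw [Finset.sum_range_succ]
        exact add_mem (ih v hsub) (Submodule.mem_sup_left (hAmem n _ ((memX1 _).mpr hx)))
    intro w hw
    obtain ⟨n, v, rfl⟩ := rep_exists w
    rcases n with _ | n
    · simpa using Submodule.zero_mem (A ⊔ B)
    · exact main n v hw
  · refine sup_le ?_ ?_
    · rintro x ⟨u, rfl⟩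
      induction u using TensorProduct.induction_on with
      | zero => simpa using M.zero_mem
      | tmul f y =>
        rw [TensorProduct.map_tmul]
        have hmul : ∀ g : Polynomial ℂ, ((X : Polynomial ℂ) * g) ⊗ₜ[ℂ] (y : V) ∈ M := by
          intro g
          induction g using Polynomial.induction_on' with
          | add p q hp hq =>
            rw [mul_add, add_tmul]
            exact add_mem hp hq
          | monomial j a =>
            rw [← C_mul_X_pow_eq_monomial]
            have e : (X : Polynomial ℂ) * (C a * X ^ j) = a • ((X : Polynomial ℂ) ^ (j+1)) := by
              rw [Polynomial.smul_eq_C_mul]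
              ring
            rw [e, ← smul_tmul']
            exact M.smul_mem a (hprop _ ((memX1 _).mp y.2) j)
        simpa using hmul f
      | add p q hp hq =>
        rw [map_add]
        exact add_mem hp hq
    · rintro x ⟨u, rfl⟩
      induction u using TensorProduct.induction_on with
      | zero => simpa using M.zero_mem
      | tmul f y =>
        rw [LinearMap.lTensor_tmul]
        induction f using Polynomial.induction_on' with
        | add p q hp hq =>
          rw [add_tmul]
          exact add_mem hp hq
        | monomial j a =>
          rw [← C_mul_X_pow_eq_monomial, ← Polynomial.smul_eq_C_mul, ← smul_tmul']
          refine M.smul_mem a ?_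
          rcases j with _ | j
          · simpa using (memX2 _).mp y.2
          · exact hprop _ ((memX1 _).mp (X2subX1 _ y.2)) j
      | add p q hp hq =>
        rw [map_add]
        exact add_mem hp hq
end

section
/- Let λ ∈ ℂ*, b ∈ ℂ, θ, h ∈ ℂ, and let v₀ be the highest weight vector of the Verma module V̄(θ,h). Then Ω(λ,b) ⊗ V̄(θ,h) is a cyclic Virasoro module generated by 1 ⊗ v₀: the U(Vir)-submodule generated by 1 ⊗ v₀ is the whole tensor product. -/
open Polynomial TensorProduct

/-- `Ω(λ,b) ⊗ V̄(θ,h)` is cyclic, generated by `1 ⊗ v₀` where `v₀` is the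
highest weight vector: every Virasoro submodule containing `1 ⊗ v₀` is everything. -/
theorem tensor_with_verma_cyclic {V : Type*} [AddCommGroup V] [Module ℂ V]
    (lam b th h : ℂ) (hlam : lam ≠ 0)
    (d : ℤ → Module.End ℂ V) (cV : Module.End ℂ V) (hrep : VirRep d cV)
    (v0 : V) (hv0 : v0 ≠ 0)
    (hup : ∀ k : ℤ, 0 < k → d k v0 = 0) (h0 : d 0 v0 = h • v0) (hc : cV v0 = th • v0)
    (hcyc : ∀ p : Submodule ℂ V, VirInvariant d cV p → v0 ∈ p → p = ⊤)
    (M : Submodule ℂ (Polynomial ℂ ⊗[ℂ] V))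
    (hM : VirInvariant (tensorD (omegaD lam b) d) (tensorC 0 cV) M)
    (h1 : (1 : Polynomial ℂ) ⊗ₜ[ℂ] v0 ∈ M) :
    M = ⊤ := by
  classical
  -- S = polynomials f with f ⊗ v0 ∈ M
  set S : Submodule ℂ (Polynomial ℂ) :=
    M.comap ((TensorProduct.mk ℂ (Polynomial ℂ) V).flip v0) with hSdef
  have hmemS : ∀ f : Polynomial ℂ, f ∈ S ↔ f ⊗ₜ[ℂ] v0 ∈ M := fun f => Iff.rfl
  have hclose : ∀ f ∈ S, (X + C (b - 1)) * f.comp (X - C 1) ∈ S := by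
    intro f hf
    have hd1 : d 1 v0 = 0 := hup 1 one_pos
    have h2 := hM.1 1 _ ((hmemS f).mp hf)
    have heq : tensorD (omegaD lam b) d 1 (f ⊗ₜ[ℂ] v0)
        = lam • (((X + C (b - 1)) * f.comp (X - C 1)) ⊗ₜ[ℂ] v0) := by
      simp only [tensorD, LinearMap.add_apply, LinearMap.rTensor_tmul,
        LinearMap.lTensor_tmul, hd1, TensorProduct.tmul_zero, add_zero, omegaD,
        LinearMap.coe_mk, AddHom.coe_mk, zpow_one, Int.cast_one, one_mul,
        TensorProduct.smul_tmul']
    rw [heq] at h2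
    have h3 := M.smul_mem lam⁻¹ h2
    rw [smul_smul, inv_mul_cancel₀ hlam, one_smul] at h3
    exact (hmemS _).mpr h3
  -- Step A: degree bound + monomials in S implies f ∈ S
  have hA : ∀ n : ℕ, (∀ k < n, (X : Polynomial ℂ) ^ k ∈ S) →
      ∀ f : Polynomial ℂ, f.degree < (n : ℕ) → f ∈ S := by
    intro n
    induction n with
    | zero =>
      intro _ f hf
      have : f = 0 := by
        rw [← Polynomial.degree_eq_bot]
        exact Nat.WithBot.lt_zero_iff.mp (by exact_mod_cast hf)
      rw [this]; exact S.zero_mem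
    | succ n ih =>
      intro hmon f hf
      have hfn : (f - f.coeff n • X ^ n).degree < ((n : ℕ) : WithBot ℕ) := by
        have hf' := (Polynomial.degree_lt_iff_coeff_zero f (n + 1)).mp (by exact_mod_cast hf)
        apply (Polynomial.degree_lt_iff_coeff_zero _ n).mpr
        intro m hm
        rcases eq_or_lt_of_le hm with h | h
        · simp [← h, Polynomial.coeff_smul, Polynomial.coeff_X_pow]
        · have := hf' m h
          simp [this, Polynomial.coeff_smul, Polynomial.coeff_X_pow, Nat.ne_of_gt h]
      have hsub : f - f.coeff n • X ^ n ∈ S :=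
        ih (fun k hk => hmon k (hk.trans (Nat.lt_succ_self n))) _ hfn
      have hXn : (X : Polynomial ℂ) ^ n ∈ S := hmon n (Nat.lt_succ_self n)
      have : f = (f - f.coeff n • X ^ n) + f.coeff n • X ^ n := by ring
      rw [this]
      exact S.add_mem hsub (S.smul_mem _ hXn)
  -- Step B: all monomials are in S
  have hB : ∀ n : ℕ, (X : Polynomial ℂ) ^ n ∈ S := by
    intro n
    induction n using Nat.strong_induction_on with
    | _ n ih =>
      match n with
      | 0 => simpa using (hmemS 1).mpr h1
      | Nat.succ m =>
        have hXm := ih m (Nat.lt_succ_self m)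
        have hg : (X + C (b - 1)) * ((X : Polynomial ℂ) ^ m).comp (X - C 1) ∈ S :=
          hclose _ hXm
        set g := (X + C (b - 1)) * ((X : Polynomial ℂ) ^ m).comp (X - C 1) with hgdef
        have hgeq : g = (X + C (b - 1)) * (X - C 1) ^ m := by
          rw [hgdef, Polynomial.pow_comp, Polynomial.X_comp]
        have hmonic : g.Monic := by
          rw [hgeq]
          exact (monic_X_add_C _).mul ((monic_X_sub_C _).pow m)
        have hndeg : g.natDegree = m + 1 := by
          rw [hgeq, Polynomial.natDegree_mul (monic_X_add_C _).ne_zero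
            (((monic_X_sub_C (1 : ℂ)).pow m).ne_zero)]
          rw [Polynomial.natDegree_X_add_C, Polynomial.natDegree_pow,
            Polynomial.natDegree_X_sub_C, mul_one, add_comm]
        have hdeg : g.degree = ((m + 1 : ℕ) : WithBot ℕ) := by
          rw [Polynomial.degree_eq_natDegree hmonic.ne_zero, hndeg]
        have hsubdeg : (g - X ^ (m + 1)).degree < ((m + 1 : ℕ) : WithBot ℕ) := by
          have hd2 : g.degree = ((X : Polynomial ℂ) ^ (m + 1)).degree := by
            rw [hdeg, Polynomial.degree_X_pow]
          have hl : g.leadingCoeff = ((X : Polynomial ℂ) ^ (m + 1)).leadingCoeff := by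
            rw [hmonic, (monic_X_pow _ : ((X : Polynomial ℂ) ^ (m + 1)).Monic)]
          have := Polynomial.degree_sub_lt hd2 hmonic.ne_zero hl
          rwa [hdeg] at this
        have hsubmem : g - X ^ (m + 1) ∈ S :=
          hA (m + 1) (fun k hk => ih k hk) _ hsubdeg
        have : (X : Polynomial ℂ) ^ (m + 1) = g - (g - X ^ (m + 1)) := by ring
        rw [this]
        exact S.sub_mem hg hsubmem
  have hallS : ∀ f : Polynomial ℂ, f ⊗ₜ[ℂ] v0 ∈ M := by
    intro f
    have : f ∈ S := by
      induction f using Polynomial.induction_on' with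
      | add p q hp hq => exact S.add_mem hp hq
      | monomial n a =>
        rw [← Polynomial.smul_X_eq_monomial]
        exact S.smul_mem a (hB n)
    exact (hmemS f).mp this
  -- N = vectors w with f ⊗ w ∈ M for all f
  set N : Submodule ℂ V :=
    ⨅ f : Polynomial ℂ, M.comap ((TensorProduct.mk ℂ (Polynomial ℂ) V) f) with hNdef
  have hmemN : ∀ w : V, w ∈ N ↔ ∀ f : Polynomial ℂ, f ⊗ₜ[ℂ] w ∈ M := by
    intro w
    rw [hNdef, Submodule.mem_iInf]
    exact Iff.rfl
  have hNinv : VirInvariant d cV N := by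
    constructor
    · intro i w hw
      rw [hmemN] at hw ⊢
      intro f
      have h2 := hM.1 i _ (hw f)
      have heq : tensorD (omegaD lam b) d i (f ⊗ₜ[ℂ] w)
          = (omegaD lam b i f) ⊗ₜ[ℂ] w + f ⊗ₜ[ℂ] (d i w) := by
        simp [tensorD]
      rw [heq] at h2
      have h3 := hw (omegaD lam b i f)
      have h4 := M.sub_mem h2 h3
      simpa using h4
    · intro w hw
      rw [hmemN] at hw ⊢
      intro f
      have h2 := hM.2 _ (hw f)
      have heq : tensorC (0 : Module.End ℂ (Polynomial ℂ)) cV (f ⊗ₜ[ℂ] w)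
          = f ⊗ₜ[ℂ] (cV w) := by
        simp [tensorC]
      rwa [heq] at h2
  have hv0N : v0 ∈ N := (hmemN v0).mpr hallS
  have hNtop : N = ⊤ := hcyc N hNinv hv0N
  rw [eq_top_iff]
  rintro x -
  induction x using TensorProduct.induction_on with
  | zero => exact M.zero_mem
  | tmul f w =>
    exact (hmemN w).mp (hNtop ▸ Submodule.mem_top) f
  | add x y hx hy => exact M.add_mem hx hy
end
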